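/- arXiv:2604.15752 — 8 statements merged into one kernel-verified Lean document; each statement's English description precedes it below -/
import Mathlib

section
/- Let U ⊆ ℝ^d be open, and let ρ : U → Matrix (Fin n) (Fin n) ℂ and G_μ : U → Matrix (Fin n) (Fin n) ℂ (for μ = 1,…,d) be continuously differentiable families of Hermitian matrices satisfying ∂_μ ρ = G_μ ρ + ρ G_μ on U for every μ. Define the dual curvature F̃_{μν} := ∂_μ G_ν − ∂_ν G_μ − [G_μ, G_ν]. Then at every point of U and for all indices μ, ν one has F̃_{μν} ρ + ρ (F̃_{μν})† = 0, provided ρ is twice continuously differentiable (so that mixed partial derivatives of ρ commute). -/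
open Matrix

/-- The partial derivative `∂_μ` of a matrix-valued function on `ℝ^d`, taken entrywise. -/
noncomputable def matPDeriv {d n m : ℕ} (μ : Fin d)
    (f : (Fin d → ℝ) → Matrix (Fin n) (Fin m) ℂ) (x : Fin d → ℝ) :
    Matrix (Fin n) (Fin m) ℂ :=
  Matrix.of fun i j => fderiv ℝ (fun y => f y i j) x (Pi.single μ 1)

lemma matPDeriv_add {d n : ℕ} (τ : Fin d)
    (f g : (Fin d → ℝ) → Matrix (Fin n) (Fin n) ℂ) (x : Fin d → ℝ)
    (hf : ∀ i j, DifferentiableAt ℝ (fun y => f y i j) x)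
    (hg : ∀ i j, DifferentiableAt ℝ (fun y => g y i j) x) :
    matPDeriv τ (fun y => f y + g y) x = matPDeriv τ f x + matPDeriv τ g x := by
  ext i j
  simp only [matPDeriv, Matrix.of_apply, Matrix.add_apply]
  rw [fderiv_fun_add (hf i j) (hg i j)]
  simp

lemma matPDeriv_mul {d n : ℕ} (τ : Fin d)
    (f g : (Fin d → ℝ) → Matrix (Fin n) (Fin n) ℂ) (x : Fin d → ℝ)
    (hf : ∀ i j, DifferentiableAt ℝ (fun y => f y i j) x)
    (hg : ∀ i j, DifferentiableAt ℝ (fun y => g y i j) x) :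
    matPDeriv τ (fun y => f y * g y) x
      = matPDeriv τ f x * g x + f x * matPDeriv τ g x := by
  ext i j
  simp only [matPDeriv, Matrix.of_apply, Matrix.add_apply, Matrix.mul_apply]
  have h1 : fderiv ℝ (fun y => ∑ k, f y i k * g y k j) x
      = ∑ k, (f x i k • fderiv ℝ (fun y => g y k j) x
          + g x k j • fderiv ℝ (fun y => f y i k) x) := by
    rw [fderiv_fun_sum (A := fun k y => f y i k * g y k j) (fun k _ => ((hf i k).mul (hg k j)))]
    exact Finset.sum_congr rfl fun k _ => fderiv_fun_mul (hf i k) (hg k j)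
  rw [h1]
  simp only [ContinuousLinearMap.sum_apply, ContinuousLinearMap.add_apply,
    ContinuousLinearMap.smul_apply, smul_eq_mul, ← Finset.sum_add_distrib]
  exact Finset.sum_congr rfl fun k _ => by ring

lemma fderiv_conj {d : ℕ} (f : (Fin d → ℝ) → ℂ) (x : Fin d → ℝ)
    (hf : DifferentiableAt ℝ f x) (v : Fin d → ℝ) :
    fderiv ℝ (fun y => star (f y)) x v = star (fderiv ℝ f x v) := by
  have h : HasFDerivAt (fun y => star (f y))
      ((Complex.conjCLE : ℂ →L[ℝ] ℂ).comp (fderiv ℝ f x)) x := by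
    have := (Complex.conjCLE : ℂ ≃L[ℝ] ℂ).hasFDerivAt.comp x hf.hasFDerivAt
    simpa [Function.comp_def, Complex.conjCLE_apply, Complex.star_def] using this
  rw [h.fderiv]
  simp [Complex.conjCLE_apply, Complex.star_def]

/-- If `ρ` (twice continuously differentiable) and `G_μ` (continuously
differentiable) are Hermitian families on an open set `U ⊆ ℝ^d` satisfying
`∂_μ ρ = G_μ ρ + ρ G_μ`, then the dual curvature
`F̃_{μν} = ∂_μ G_ν − ∂_ν G_μ − [G_μ, G_ν]` satisfies `F̃_{μν} ρ + ρ F̃_{μν}† = 0` on `U`. -/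
theorem dual_curvature_rho_relation {d n : ℕ} (U : Set (Fin d → ℝ)) (hU : IsOpen U)
    (ρ : (Fin d → ℝ) → Matrix (Fin n) (Fin n) ℂ)
    (G : Fin d → (Fin d → ℝ) → Matrix (Fin n) (Fin n) ℂ)
    (hρC2 : ∀ i j, ContDiffOn ℝ 2 (fun x => ρ x i j) U)
    (hGC1 : ∀ μ i j, ContDiffOn ℝ 1 (fun x => G μ x i j) U)
    (hρHerm : ∀ x ∈ U, (ρ x).IsHermitian)
    (hGHerm : ∀ μ, ∀ x ∈ U, (G μ x).IsHermitian)
    (heq : ∀ μ, ∀ x ∈ U, matPDeriv μ ρ x = G μ x * ρ x + ρ x * G μ x) :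
    ∀ x ∈ U, ∀ μ ν : Fin d,
      (matPDeriv μ (G ν) x - matPDeriv ν (G μ) x
          - (G μ x * G ν x - G ν x * G μ x)) * ρ x
        + ρ x * (matPDeriv μ (G ν) x - matPDeriv ν (G μ) x
          - (G μ x * G ν x - G ν x * G μ x))ᴴ = 0 := by
  intro x hx μ ν
  have hUx : U ∈ nhds x := hU.mem_nhds hx
  -- differentiability of entries at points of U
  have hρd : ∀ y ∈ U, ∀ i j, DifferentiableAt ℝ (fun z => ρ z i j) y := fun y hy i j =>
    ((hρC2 i j).contDiffAt (hU.mem_nhds hy)).differentiableAt two_ne_zero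
  have hGd : ∀ τ, ∀ y ∈ U, ∀ i j, DifferentiableAt ℝ (fun z => G τ z i j) y := fun τ y hy i j =>
    ((hGC1 τ i j).contDiffAt (hU.mem_nhds hy)).differentiableAt one_ne_zero
  -- Hermiticity of the derivative of G at x
  have hDGHerm : ∀ σ τ : Fin d, (matPDeriv σ (G τ) x)ᴴ = matPDeriv σ (G τ) x := by
    intro σ τ
    ext i j
    simp only [Matrix.conjTranspose_apply, matPDeriv, Matrix.of_apply]
    have hee : (fun y => star (G τ y j i)) =ᶠ[nhds x] fun y => G τ y i j := by
      filter_upwards [hUx] with y hy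
      exact (hGHerm τ y hy).apply i j
    calc star (fderiv ℝ (fun y => G τ y j i) x (Pi.single σ 1))
        = fderiv ℝ (fun y => star (G τ y j i)) x (Pi.single σ 1) :=
          (fderiv_conj _ x (hGd τ x hx j i) _).symm
      _ = fderiv ℝ (fun y => G τ y i j) x (Pi.single σ 1) := by rw [hee.fderiv_eq]
  -- second derivatives of ρ entries are symmetric
  have hsymm : matPDeriv ν (matPDeriv μ ρ) x = matPDeriv μ (matPDeriv ν ρ) x := by
    ext i j
    simp only [matPDeriv, Matrix.of_apply]
    have hf2 : ContDiffAt ℝ 2 (fun y => ρ y i j) x := (hρC2 i j).contDiffAt hUx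
    have hfd : DifferentiableAt ℝ (fderiv ℝ fun y => ρ y i j) x :=
      (hf2.fderiv_right (m := 1) le_rfl).differentiableAt one_ne_zero
    have hkey : ∀ v w : Fin d → ℝ,
        fderiv ℝ (fun y => fderiv ℝ (fun z => ρ z i j) y v) x w
          = fderiv ℝ (fderiv ℝ fun z => ρ z i j) x w v := by
      intro v w
      rw [fderiv_clm_apply hfd (differentiableAt_const v)]
      simp
    rw [hkey, hkey]
    exact (hf2.isSymmSndFDerivAt (by norm_num)) _ _
  -- rewrite second derivative of ρ via the flow equation
  have hcongr : ∀ σ τ : Fin d, matPDeriv τ (matPDeriv σ ρ) x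
      = matPDeriv τ (fun y => G σ y * ρ y + ρ y * G σ y) x := by
    intro σ τ
    ext i j
    simp only [matPDeriv, Matrix.of_apply]
    have hee : (fun y => fderiv ℝ (fun z => ρ z i j) y (Pi.single σ 1))
        =ᶠ[nhds x] fun y => (G σ y * ρ y + ρ y * G σ y) i j := by
      filter_upwards [hUx] with y hy
      have h := congrArg (fun M : Matrix (Fin n) (Fin n) ℂ => M i j) (heq σ y hy)
      simpa [matPDeriv] using h
    rw [hee.fderiv_eq]
  -- expand the derivative of the product
  have hexp : ∀ σ τ : Fin d, matPDeriv τ (fun y => G σ y * ρ y + ρ y * G σ y) x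
      = matPDeriv τ (G σ) x * ρ x + G σ x * matPDeriv τ ρ x
        + (matPDeriv τ ρ x * G σ x + ρ x * matPDeriv τ (G σ) x) := by
    intro σ τ
    have h1 := matPDeriv_mul τ (G σ) ρ x (hGd σ x hx) (hρd x hx)
    have h2 := matPDeriv_mul τ ρ (G σ) x (hρd x hx) (hGd σ x hx)
    have h3 := matPDeriv_add τ (fun y => G σ y * ρ y) (fun y => ρ y * G σ y) x
      (fun i j => by
        have : (fun y => (G σ y * ρ y) i j) = fun y => ∑ k, G σ y i k * ρ y k j := by
          funext y; simp [Matrix.mul_apply]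
        rw [this]
        exact DifferentiableAt.fun_sum fun k _ => (hGd σ x hx i k).mul (hρd x hx k j))
      (fun i j => by
        have : (fun y => (ρ y * G σ y) i j) = fun y => ∑ k, ρ y i k * G σ y k j := by
          funext y; simp [Matrix.mul_apply]
        rw [this]
        exact DifferentiableAt.fun_sum fun k _ => (hρd x hx i k).mul (hGd σ x hx k j))
    rw [h3, h1, h2]
  -- main algebraic identity
  have e1 := (hcongr μ ν).symm.trans (hsymm.trans (hcongr ν μ))
  rw [hexp μ ν, hexp ν μ, heq μ x hx, heq ν x hx] at e1
  have hconj : (matPDeriv μ (G ν) x - matPDeriv ν (G μ) x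
        - (G μ x * G ν x - G ν x * G μ x))ᴴ
      = matPDeriv μ (G ν) x - matPDeriv ν (G μ) x
        - (G ν x * G μ x - G μ x * G ν x) := by
    simp only [Matrix.conjTranspose_sub, Matrix.conjTranspose_mul, hDGHerm,
      (hGHerm μ x hx).eq, (hGHerm ν x hx).eq]
  rw [hconj]
  linear_combination (norm := noncomm_ring) -e1
end

section
/- Let λ_1, …, λ_r be positive reals, let φ_1, …, φ_r be an orthonormal family in ℂⁿ, and let W := Σ_{k=1}^r √λ_k φ_k (e_k)† ∈ Matrix (Fin n) (Fin r) ℂ. Suppose F̃₁, F̃₂ ∈ Matrix (Fin n) (Fin n) ℂ and F₁, F₂ ∈ Matrix (Fin r) (Fin r) ℂ satisfy F̃₁ W = W F₁ᵀ and F̃₂ W = W F₂ᵀ. Then tr(F₁ F₂) = Σ_{ℓ,m=1}^r ⟨φ_ℓ, F̃₁ φ_m⟩ ⟨φ_m, F̃₂ φ_ℓ⟩. -/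
open Matrix

/-- Let `W = Σ_k √λ_k |φ_k⟩⟨e_k|` be the purification amplitude of
`ρ = Σ_k λ_k |φ_k⟩⟨φ_k|` in the eigenbasis gauge (`λ_k > 0`, `φ_k` orthonormal in `ℂⁿ`).
If `F̃₁ W = W F₁ᵀ` and `F̃₂ W = W F₂ᵀ`, then
`tr(F₁ F₂) = Σ_{ℓ,m} ⟨φ_ℓ, F̃₁ φ_m⟩ ⟨φ_m, F̃₂ φ_ℓ⟩`. -/
theorem trace_curvature_product {n r : ℕ}
    (lam : Fin r → ℝ) (hlam : ∀ k, 0 < lam k)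
    (φ : Fin r → (Fin n → ℂ))
    (hortho : ∀ k l, star (φ k) ⬝ᵥ φ l = if k = l then (1 : ℂ) else 0)
    (F'₁ F'₂ : Matrix (Fin n) (Fin n) ℂ) (F₁ F₂ : Matrix (Fin r) (Fin r) ℂ)
    (hFW₁ : F'₁ * (Matrix.of fun i k => (Real.sqrt (lam k) : ℂ) * φ k i)
          = (Matrix.of fun i k => (Real.sqrt (lam k) : ℂ) * φ k i) * F₁ᵀ)
    (hFW₂ : F'₂ * (Matrix.of fun i k => (Real.sqrt (lam k) : ℂ) * φ k i)
          = (Matrix.of fun i k => (Real.sqrt (lam k) : ℂ) * φ k i) * F₂ᵀ) :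
    Matrix.trace (F₁ * F₂)
      = ∑ ℓ : Fin r, ∑ m : Fin r,
          (star (φ ℓ) ⬝ᵥ F'₁.mulVec (φ m)) * (star (φ m) ⬝ᵥ F'₂.mulVec (φ ℓ)) := by
  set c : Fin r → ℂ := fun k => (Real.sqrt (lam k) : ℂ) with hc
  have hcne : ∀ k, c k ≠ 0 := by
    intro k
    simp [hc, Complex.ofReal_ne_zero, Real.sqrt_ne_zero', hlam k]
  set W : Matrix (Fin n) (Fin r) ℂ :=
    Matrix.of fun i k => c k * φ k i with hW
  have key : ∀ (F' : Matrix (Fin n) (Fin n) ℂ) (F : Matrix (Fin r) (Fin r) ℂ),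
      F' * W = W * Fᵀ → ∀ ℓ m,
      (star (φ ℓ) ⬝ᵥ F'.mulVec (φ m)) * c m = c ℓ * F m ℓ := by
    intro F' F h ℓ m
    have step1 : (star (φ ℓ) ⬝ᵥ F'.mulVec (φ m)) * c m
        = ∑ i, star (φ ℓ i) * ((F' * W) i m) := by
      simp only [dotProduct, mulVec, Matrix.mul_apply, hW, Matrix.of_apply,
        Finset.sum_mul, Finset.mul_sum, Pi.star_apply]
      refine Finset.sum_congr rfl fun i _ => Finset.sum_congr rfl fun j _ => by ring
    have step2 : ∑ i, star (φ ℓ i) * ((W * Fᵀ) i m)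
        = ∑ k, (star (φ ℓ) ⬝ᵥ φ k) * (c k * F m k) := by
      simp only [Matrix.mul_apply, hW, Matrix.of_apply, Matrix.transpose_apply,
        dotProduct, Finset.mul_sum, Finset.sum_mul, Pi.star_apply]
      rw [Finset.sum_comm]
      refine Finset.sum_congr rfl fun k _ => Finset.sum_congr rfl fun i _ => by ring
    rw [step1, h, step2]
    simp [hortho, Finset.sum_ite_eq']
  have k1 := key F'₁ F₁ hFW₁
  have k2 := key F'₂ F₂ hFW₂
  have hterm : ∀ ℓ m, (star (φ ℓ) ⬝ᵥ F'₁.mulVec (φ m)) * (star (φ m) ⬝ᵥ F'₂.mulVec (φ ℓ))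
      = F₁ m ℓ * F₂ ℓ m := by
    intro ℓ m
    have e1 : star (φ ℓ) ⬝ᵥ F'₁.mulVec (φ m) = c ℓ * F₁ m ℓ / c m := by
      rw [eq_div_iff (hcne m)]; exact k1 ℓ m
    have e2 : star (φ m) ⬝ᵥ F'₂.mulVec (φ ℓ) = c m * F₂ ℓ m / c ℓ := by
      rw [eq_div_iff (hcne ℓ)]; exact k2 m ℓ
    rw [e1, e2, div_mul_div_comm, div_eq_iff (mul_ne_zero (hcne m) (hcne ℓ))]
    ring
  calc Matrix.trace (F₁ * F₂) = ∑ m, ∑ ℓ, F₁ m ℓ * F₂ ℓ m := by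
        simp [Matrix.trace, Matrix.mul_apply, Matrix.diag]
    _ = ∑ ℓ, ∑ m, F₁ m ℓ * F₂ ℓ m := Finset.sum_comm
    _ = _ := by
        refine Finset.sum_congr rfl fun ℓ _ => Finset.sum_congr rfl fun m _ => ?_
        rw [hterm]
end

section
/- Let ρ ∈ Matrix (Fin n) (Fin n) ℂ, and let φ_ℓ, φ_m be eigenvectors of ρ with eigenvalues λ_ℓ > 0 and λ_m > 0 respectively. Let H ∈ Matrix (Fin n) (Fin n) ℂ be Hermitian and K ∈ Matrix (Fin n) (Fin n) ℂ be anti-Hermitian, and set F̃ := H − K. Suppose F̃ ρ + ρ F̃† = 0. Then ⟨φ_m, H φ_ℓ⟩ = ((λ_ℓ − λ_m)/(λ_ℓ + λ_m)) ⟨φ_m, K φ_ℓ⟩, and consequently ⟨φ_m, F̃ φ_ℓ⟩ = −(2λ_m/(λ_ℓ + λ_m)) ⟨φ_m, K φ_ℓ⟩. -/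
open Matrix

/-- Let `ρ` be Hermitian with eigenvectors `φ_ℓ, φ_m` for positive eigenvalues
`λ_ℓ, λ_m`, let `H` be Hermitian, `K` anti-Hermitian, and `F̃ := H − K`. If
`F̃ ρ + ρ F̃† = 0`, then `⟨φ_m, H φ_ℓ⟩ = ((λ_ℓ − λ_m)/(λ_ℓ + λ_m)) ⟨φ_m, K φ_ℓ⟩` and
consequently `⟨φ_m, F̃ φ_ℓ⟩ = −(2λ_m/(λ_ℓ + λ_m)) ⟨φ_m, K φ_ℓ⟩`. -/
theorem dual_curvature_matrix_element_formula {n : ℕ}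
    (ρ : Matrix (Fin n) (Fin n) ℂ) (hρ : ρ.IsHermitian)
    (φℓ φm : Fin n → ℂ) (lamℓ lamm : ℝ)
    (hφℓ : φℓ ≠ 0) (hφm : φm ≠ 0)
    (hlamℓ : 0 < lamℓ) (hlamm : 0 < lamm)
    (heigℓ : ρ.mulVec φℓ = (lamℓ : ℂ) • φℓ)
    (heigm : ρ.mulVec φm = (lamm : ℂ) • φm)
    (H K : Matrix (Fin n) (Fin n) ℂ)
    (hH : H.IsHermitian) (hK : Kᴴ = -K)
    (hrel : (H - K) * ρ + ρ * (H - K)ᴴ = 0) :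
    star φm ⬝ᵥ H.mulVec φℓ
        = (((lamℓ - lamm) / (lamℓ + lamm) : ℝ) : ℂ) * (star φm ⬝ᵥ K.mulVec φℓ)
    ∧ star φm ⬝ᵥ (H - K).mulVec φℓ
        = -(((2 * lamm) / (lamℓ + lamm) : ℝ) : ℂ) * (star φm ⬝ᵥ K.mulVec φℓ) := by
  set h := star φm ⬝ᵥ H.mulVec φℓ with hh
  set k := star φm ⬝ᵥ K.mulVec φℓ with hk
  have hadjF : (H - K)ᴴ = H + K := by
    rw [conjTranspose_sub, hH.eq, hK, sub_neg_eq_add]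
  -- left vecMul by star φm
  have hvm : star φm ᵥ* ρ = (lamm : ℂ) • star φm := by
    have : star (ρ.mulVec φm) = star φm ᵥ* ρᴴ := star_mulVec ρ φm
    rw [hρ.eq] at this
    rw [← this, heigm, star_smul]
    simp [Complex.star_def]
  have key : ((lamℓ : ℂ) + lamm) * h = ((lamℓ : ℂ) - lamm) * k := by
    have h0 : star φm ⬝ᵥ ((H - K) * ρ + ρ * (H - K)ᴴ).mulVec φℓ = 0 := by
      rw [hrel]; simp
    rw [hadjF, add_mulVec, dotProduct_add, ← mulVec_mulVec, ← mulVec_mulVec,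
      heigℓ, mulVec_smul, dotProduct_smul,
      dotProduct_mulVec (star φm) ρ, hvm, smul_dotProduct,
      sub_mulVec, add_mulVec, dotProduct_sub, dotProduct_add,
      smul_eq_mul, smul_eq_mul, ← hh, ← hk] at h0
    linear_combination h0
  have hne : ((lamℓ : ℂ) + lamm) ≠ 0 := by
    have : (0:ℝ) < lamℓ + lamm := by linarith
    exact_mod_cast (by exact_mod_cast this.ne' : ((lamℓ + lamm : ℝ) : ℂ) ≠ 0)
  constructor
  · push_cast
    field_simp
    linear_combination key
  · push_cast
    rw [sub_mulVec, dotProduct_sub, ← hh, ← hk]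
    field_simp
    linear_combination key
end

section
/- Let d, r be positive integers, let g ∈ Matrix (Fin d) (Fin d) ℝ be symmetric positive definite with inverse entries g^{μν}, and for each pair (μ,ν) let F_{μν} ∈ Matrix (Fin r) (Fin r) ℂ be anti-Hermitian matrices satisfying F_{νμ} = −F_{μν}. Then 𝒞 := −(1/4) Σ_{μ,ν,α,β=1}^d g^{μα} g^{νβ} tr(F_{μν} F_{αβ}) is a nonnegative real number, and 𝒞 = 0 if and only if F_{μν} = 0 for all μ, ν. -/
open Matrix

section Aux

variable {n m : Type*} [Fintype n] [Fintype m]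

lemma curv_h4 {M : Type*} [AddCommMonoid M] (f : n → n → n → n → M) :
    ∑ a, ∑ b, ∑ c, ∑ e, f a b c e = ∑ c, ∑ e, ∑ b, ∑ a, f a b c e := by
  conv_lhs => enter [2, a]; rw [Finset.sum_comm]
  rw [Finset.sum_comm]
  conv_lhs => enter [2, c, 2, a]; rw [Finset.sum_comm]
  conv_lhs => enter [2, c]; rw [Finset.sum_comm]
  conv_lhs => enter [2, c, 2, e]; rw [Finset.sum_comm]

lemma curv_h6 {M : Type*} [AddCommMonoid M] (f : n → n → n → n → m → m → M) :
    ∑ a, ∑ b, ∑ c, ∑ e, ∑ i, ∑ j, f a b c e i j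
      = ∑ i, ∑ j, ∑ a, ∑ b, ∑ c, ∑ e, f a b c e i j := by
  conv_lhs => enter [2, a, 2, b, 2, c]; rw [Finset.sum_comm]
  conv_lhs => enter [2, a, 2, b]; rw [Finset.sum_comm]
  conv_lhs => enter [2, a]; rw [Finset.sum_comm]
  rw [Finset.sum_comm]
  conv_lhs => enter [2, i, 2, a, 2, b, 2, c]; rw [Finset.sum_comm]
  conv_lhs => enter [2, i, 2, a, 2, b]; rw [Finset.sum_comm]
  conv_lhs => enter [2, i, 2, a]; rw [Finset.sum_comm]
  conv_lhs => enter [2, i]; rw [Finset.sum_comm]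

lemma curv_step1 (G X : Matrix n n ℂ) (hG : ∀ i j, G i j = G j i) :
    ∑ μ, ∑ ν, ∑ α, ∑ β, G μ α * G ν β * (X μ ν * (starRingEnd ℂ) (X α β))
      = Matrix.trace (G * X * G * Xᴴ) := by
  rw [curv_h4]
  simp only [Matrix.trace, Matrix.diag, Matrix.mul_apply, Matrix.conjTranspose_apply,
    Finset.sum_mul, Finset.mul_sum]
  refine Finset.sum_congr rfl fun α _ => Finset.sum_congr rfl fun β _ =>
    Finset.sum_congr rfl fun ν _ => Finset.sum_congr rfl fun μ _ => ?_
  rw [hG μ α]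
  ring_nf
  rfl

lemma curv_step2 (C X : Matrix n n ℂ) (hC : Cᴴ = C) :
    Matrix.trace ((C * C) * X * (C * C) * Xᴴ)
      = Matrix.trace ((C * X * C) * (C * X * C)ᴴ) := by
  rw [conjTranspose_mul, conjTranspose_mul, hC]
  rw [show C * X * C * (C * (Xᴴ * C)) = (C * X * C * C * Xᴴ) * C by noncomm_ring]
  conv_rhs => rw [Matrix.trace_mul_comm]
  congr 1
  noncomm_ring

lemma curv_trace_self (M : Matrix m m ℂ) :
    Matrix.trace (M * Mᴴ) = ((∑ i, ∑ j, Complex.normSq (M i j) : ℝ) : ℂ) := by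
  simp [Matrix.trace, Matrix.mul_apply, Matrix.diag, Matrix.conjTranspose_apply,
    Complex.mul_conj]

end Aux

/-- The scalar curvature measure `𝒞 = −(1/4) Σ g^{μα} g^{νβ} tr(F_{μν} F_{αβ})`, with indices
raised by the inverse of the metric `g`. -/
noncomputable def curvMeasure {d r : ℕ} (g : Matrix (Fin d) (Fin d) ℝ)
    (F : Fin d → Fin d → Matrix (Fin r) (Fin r) ℂ) : ℂ :=
  -(1/4 : ℂ) * ∑ μ : Fin d, ∑ ν : Fin d, ∑ α : Fin d, ∑ β : Fin d,
    ((g⁻¹ μ α : ℝ) : ℂ) * ((g⁻¹ ν β : ℝ) : ℂ) * Matrix.trace (F μ ν * F α β)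

/-- For a symmetric positive definite metric `g` and anti-Hermitian curvature
components `F_{μν}` that are antisymmetric in the indices, the scalar curvature measure
`𝒞 = −(1/4) Σ g^{μα} g^{νβ} tr(F_{μν} F_{αβ})` is a nonnegative real number, and it vanishes
if and only if all `F_{μν}` vanish. -/
theorem curvMeasure_nonneg_and_zero_iff {d r : ℕ} (hd : 0 < d) (hr : 0 < r)
    (g : Matrix (Fin d) (Fin d) ℝ) (hgsymm : g.IsSymm) (hgpos : g.PosDef)
    (F : Fin d → Fin d → Matrix (Fin r) (Fin r) ℂ)
    (hFanti : ∀ μ ν, (F μ ν)ᴴ = -(F μ ν))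
    (hFskew : ∀ μ ν, F ν μ = -(F μ ν)) :
    (curvMeasure g F).im = 0 ∧ 0 ≤ (curvMeasure g F).re ∧
      (curvMeasure g F = 0 ↔ ∀ μ ν, F μ ν = 0) := by
  classical
  have hG'pos : (g⁻¹).PosDef := hgpos.inv
  open scoped MatrixOrder in
  set B : Matrix (Fin d) (Fin d) ℝ := CFC.sqrt (g⁻¹) with hBdef
  have hBB : B * B = g⁻¹ := by
    open scoped MatrixOrder in exact CFC.sqrt_mul_sqrt_self _ hG'pos.posSemidef.nonneg
  have hBherm : B.IsHermitian := by
    open scoped MatrixOrder in exact (CFC.sqrt_nonneg (g⁻¹)).posSemidef.1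
  have hBsym : ∀ i j, B i j = B j i := by
    intro i j
    conv_lhs => rw [← hBherm]
    simp [Matrix.conjTranspose_apply]
  have hdetB : B.det ≠ 0 := by
    intro h
    have : (g⁻¹).det = 0 := by rw [← hBB, Matrix.det_mul, h, mul_zero]
    exact hG'pos.det_pos.ne' this
  set C : Matrix (Fin d) (Fin d) ℂ := B.map Complex.ofReal with hCdef
  have hCapp : ∀ i j, C i j = (B i j : ℂ) := fun i j => rfl
  have hCsym : ∀ i j, C i j = C j i := by
    intro i j; rw [hCapp, hCapp, hBsym]
  have hCstar : ∀ i j, (starRingEnd ℂ) (C i j) = C i j := by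
    intro i j; rw [hCapp]; exact Complex.conj_ofReal _
  have hCherm : Cᴴ = C := by
    ext i j
    rw [Matrix.conjTranspose_apply, ← hCsym i j]
    exact hCstar i j
  have hCCmul : C * C = (g⁻¹).map Complex.ofReal := by
    have : C * C = (B * B).map Complex.ofReal := by
      ext μ α
      simp [Matrix.mul_apply, Matrix.map_apply, hCapp]
    rw [this, hBB]
  have hdetC : IsUnit C.det := by
    have h1 : C.det = (B.det : ℂ) := by
      rw [hCdef, show B.map Complex.ofReal = Complex.ofRealHom.mapMatrix B from rfl,
        ← RingHom.map_det]
      rfl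
    rw [h1]
    exact (isUnit_iff_ne_zero).2 (by exact_mod_cast hdetB)
  set X : Fin r → Fin r → Matrix (Fin d) (Fin d) ℂ :=
    fun i j => Matrix.of (fun μ ν => F μ ν i j) with hXdef
  set N : Fin r → Fin r → Matrix (Fin d) (Fin d) ℂ := fun i j => C * X i j * C with hNdef
  set T : ℝ := ∑ i, ∑ j, ∑ s, ∑ u, Complex.normSq (N i j s u) with hTdef
  have hTnonneg : 0 ≤ T := by
    refine Finset.sum_nonneg fun i _ => Finset.sum_nonneg fun j _ =>
      Finset.sum_nonneg fun s _ => Finset.sum_nonneg fun u _ => Complex.normSq_nonneg _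
  have hGsym : ∀ a b : Fin d, ((g⁻¹).map Complex.ofReal) a b = ((g⁻¹).map Complex.ofReal) b a := by
    intro a b
    have h1 : g⁻¹ a b = g⁻¹ b a := by
      have := hG'pos.1
      conv_lhs => rw [← this]
      simp [Matrix.conjTranspose_apply]
    simp [Matrix.map_apply, h1]
  have hentry : ∀ α β i j, F α β j i = -((starRingEnd ℂ) (F α β i j)) := by
    intro α β i j
    have h1 : star (F α β j i) = -(F α β i j) := by
      have h2 := congrFun (congrFun (hFanti α β) i) j
      simpa [Matrix.conjTranspose_apply, Matrix.neg_apply] using h2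
    calc F α β j i = star (star (F α β j i)) := (star_star _).symm
      _ = -((starRingEnd ℂ) (F α β i j)) := by rw [h1, star_neg]; rfl
  have htr : ∀ μ ν α β : Fin d, Matrix.trace (F μ ν * F α β)
      = -∑ i, ∑ j, X i j μ ν * (starRingEnd ℂ) (X i j α β) := by
    intro μ ν α β
    have e1 : ∀ i j, X i j μ ν * (starRingEnd ℂ) (X i j α β)
        = -(F μ ν i j * F α β j i) := by
      intro i j
      have h2 : (starRingEnd ℂ) (X i j α β) = -(F α β j i) := by
        show (starRingEnd ℂ) (F α β i j) = _
        rw [hentry α β i j]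
        simp
      rw [h2]
      show F μ ν i j * -(F α β j i) = _
      ring
    calc Matrix.trace (F μ ν * F α β) = ∑ i, ∑ j, F μ ν i j * F α β j i := by
          simp [Matrix.trace, Matrix.diag, Matrix.mul_apply]
      _ = -∑ i, ∑ j, X i j μ ν * (starRingEnd ℂ) (X i j α β) := by
          simp [e1]
  have hmain : curvMeasure g F = (1/4 : ℂ) * (T : ℂ) := by
    rw [curvMeasure]
    have hsum : ∑ μ : Fin d, ∑ ν : Fin d, ∑ α : Fin d, ∑ β : Fin d,
        ((g⁻¹ μ α : ℝ) : ℂ) * ((g⁻¹ ν β : ℝ) : ℂ) * Matrix.trace (F μ ν * F α β)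
        = -(T : ℂ) := by
      have h1 : ∀ μ ν α β : Fin d,
          ((g⁻¹ μ α : ℝ) : ℂ) * ((g⁻¹ ν β : ℝ) : ℂ) * Matrix.trace (F μ ν * F α β)
          = -∑ i, ∑ j, (((g⁻¹).map Complex.ofReal) μ α * ((g⁻¹).map Complex.ofReal) ν β
              * (X i j μ ν * (starRingEnd ℂ) (X i j α β))) := by
        intro μ ν α β
        rw [htr]
        simp only [Matrix.map_apply, mul_neg, neg_inj, Finset.mul_sum]
      calc ∑ μ : Fin d, ∑ ν : Fin d, ∑ α : Fin d, ∑ β : Fin d,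
            ((g⁻¹ μ α : ℝ) : ℂ) * ((g⁻¹ ν β : ℝ) : ℂ) * Matrix.trace (F μ ν * F α β)
          = -∑ μ : Fin d, ∑ ν : Fin d, ∑ α : Fin d, ∑ β : Fin d, ∑ i, ∑ j,
              (((g⁻¹).map Complex.ofReal) μ α * ((g⁻¹).map Complex.ofReal) ν β
                * (X i j μ ν * (starRingEnd ℂ) (X i j α β))) := by
            simp only [h1]
            simp
        _ = -∑ i, ∑ j, ∑ μ : Fin d, ∑ ν : Fin d, ∑ α : Fin d, ∑ β : Fin d,
              (((g⁻¹).map Complex.ofReal) μ α * ((g⁻¹).map Complex.ofReal) ν β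
                * (X i j μ ν * (starRingEnd ℂ) (X i j α β))) := by
            rw [curv_h6 (fun μ ν α β i j => (((g⁻¹).map Complex.ofReal) μ α
              * ((g⁻¹).map Complex.ofReal) ν β
              * (X i j μ ν * (starRingEnd ℂ) (X i j α β))))]
        _ = -∑ i, ∑ j, Matrix.trace ((N i j) * (N i j)ᴴ) := by
            congr 1
            refine Finset.sum_congr rfl fun i _ => Finset.sum_congr rfl fun j _ => ?_
            rw [curv_step1 _ (X i j) hGsym, ← hCCmul, curv_step2 C (X i j) hCherm]
        _ = -(T : ℂ) := by
            have e2 : ∀ (i j : Fin r), Matrix.trace ((N i j) * (N i j)ᴴ)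
                = ((∑ s, ∑ u, Complex.normSq (N i j s u) : ℝ) : ℂ) :=
              fun i j => curv_trace_self _
            rw [hTdef]
            simp only [e2]
            norm_cast
    rw [hsum]
    ring
  refine ⟨?_, ?_, ?_⟩
  · rw [hmain]
    simp [Complex.mul_im]
  · rw [hmain]
    simp [Complex.mul_re]
    linarith [hTnonneg]
  · constructor
    · intro h0
      have h4 : (1/4 : ℂ) ≠ 0 := by norm_num
      have hTC : (T : ℂ) = 0 := by
        rcases mul_eq_zero.1 (hmain ▸ h0) with h | h
        · exact absurd h h4
        · exact h
      have hT0 : T = 0 := by exact_mod_cast hTC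
      have hsum0 : ∑ i, ∑ j, ∑ s, ∑ u, Complex.normSq (N i j s u) = 0 := by
        rw [← hTdef]; exact hT0
      have nn3 : ∀ (i : Fin r), ∀ j ∈ (Finset.univ : Finset (Fin r)),
          (0:ℝ) ≤ ∑ s, ∑ u, Complex.normSq (N i j s u) := fun i j _ =>
        Finset.sum_nonneg fun s _ => Finset.sum_nonneg fun u _ => Complex.normSq_nonneg _
      have hN0 : ∀ i j s u, Complex.normSq (N i j s u) = 0 := by
        intro i j s u
        have l1 := (Finset.sum_eq_zero_iff_of_nonneg (fun i _ =>
          Finset.sum_nonneg fun j _ => Finset.sum_nonneg fun s _ =>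
            Finset.sum_nonneg fun u _ => Complex.normSq_nonneg _)).1 hsum0 i
          (Finset.mem_univ i)
        have l2 := (Finset.sum_eq_zero_iff_of_nonneg (nn3 i)).1 l1 j (Finset.mem_univ j)
        have l3 := (Finset.sum_eq_zero_iff_of_nonneg (fun s _ =>
          Finset.sum_nonneg fun u _ => Complex.normSq_nonneg _)).1 l2 s (Finset.mem_univ s)
        exact (Finset.sum_eq_zero_iff_of_nonneg (fun u _ =>
          Complex.normSq_nonneg _)).1 l3 u (Finset.mem_univ u)
      have hX0 : ∀ i j, X i j = 0 := by
        intro i j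
        have hNmat : N i j = 0 := by
          ext s u
          simpa using Complex.normSq_eq_zero.1 (hN0 i j s u)
        have e : C⁻¹ * (C * X i j * C) * C⁻¹ = X i j := by
          rw [Matrix.mul_assoc C (X i j) C, ← Matrix.mul_assoc C⁻¹ C (X i j * C),
            Matrix.nonsing_inv_mul C hdetC, Matrix.one_mul, Matrix.mul_assoc,
            Matrix.mul_nonsing_inv C hdetC, Matrix.mul_one]
        calc X i j = C⁻¹ * (C * X i j * C) * C⁻¹ := e.symm
          _ = 0 := by
              rw [show C * X i j * C = N i j from rfl, hNmat, Matrix.mul_zero,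
                Matrix.zero_mul]
      intro μ ν
      ext i j
      have := congrFun (congrFun (hX0 i j) μ) ν
      exact this
    · intro hF
      rw [curvMeasure]
      have : ∀ μ ν α β : Fin d, Matrix.trace (F μ ν * F α β) = 0 := by
        intro μ ν α β
        rw [hF μ ν]
        simp
      simp [this]
end

section
/- Let ρ = Σ_{ℓ=1}^r λ_ℓ |φ_ℓ⟩⟨φ_ℓ| with λ_ℓ > 0 and φ_1,…,φ_r an orthonormal family in ℂⁿ, let G_1,…,G_d ∈ Matrix (Fin n) (Fin n) ℂ be Hermitian, and let g ∈ Matrix (Fin d) (Fin d) ℝ be symmetric positive definite with inverse entries g^{μν}. Define the curvature measure 𝒞 := − Σ_{μ,ν,α,β=1}^d g^{μα} g^{νβ} Σ_{ℓ,m=1}^r (λ_ℓ λ_m/(λ_ℓ + λ_m)²) ⟨φ_ℓ, [G_μ, G_ν] φ_m⟩ ⟨φ_m, [G_α, G_β] φ_ℓ⟩, and set L_μ := 2 G_μ. Then 𝒞 = 0 if and only if ⟨ψ, [L_μ, L_ν] ψ⟩ = 0 for every ψ in the span of {φ_1, …, φ_r} and every pair μ, ν. -/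
open Matrix
open scoped MatrixOrder

private lemma starform' {n : ℕ} (M : Matrix (Fin n) (Fin n) ℂ) (u v : Fin n → ℂ) :
    star (star u ⬝ᵥ M.mulVec v) = star v ⬝ᵥ Mᴴ.mulVec u := by
  rw [← star_dotProduct, star_mulVec, dotProduct_mulVec]

private lemma rot3' {α β γ M : Type*} [Fintype α] [Fintype β] [Fintype γ] [AddCommMonoid M]
    (f : α → β → γ → M) :
    (∑ a, ∑ b, ∑ c, f a b c) = ∑ b, ∑ c, ∑ a, f a b c := by
  rw [Finset.sum_comm]
  exact Finset.sum_congr rfl fun b _ => Finset.sum_comm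

private lemma quad_of_entries' {n r : ℕ} (M : Matrix (Fin n) (Fin n) ℂ) (φ : Fin r → Fin n → ℂ)
    (h : ∀ k l, star (φ k) ⬝ᵥ M.mulVec (φ l) = 0) :
    ∀ ψ ∈ Submodule.span ℂ (Set.range φ), ∀ χ ∈ Submodule.span ℂ (Set.range φ),
      star ψ ⬝ᵥ M.mulVec χ = 0 := by
  intro ψ hψ
  induction hψ using Submodule.span_induction with
  | mem x hx =>
    obtain ⟨k, rfl⟩ := hx
    intro χ hχ
    induction hχ using Submodule.span_induction with
    | mem y hy => obtain ⟨l, rfl⟩ := hy; exact h k l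
    | zero => simp
    | add y z _ _ hy hz => rw [Matrix.mulVec_add, dotProduct_add, hy, hz, add_zero]
    | smul c y _ hy => rw [Matrix.mulVec_smul, dotProduct_smul, hy, smul_zero]
  | zero => intro χ _; simp
  | add x y _ _ hx hy => intro χ hχ; rw [star_add, add_dotProduct, hx _ hχ, hy _ hχ, add_zero]
  | smul c x _ hx => intro χ hχ; rw [star_smul, smul_dotProduct, hx _ hχ, smul_zero]

private lemma entries_of_quad' {n r : ℕ} (M : Matrix (Fin n) (Fin n) ℂ) (φ : Fin r → Fin n → ℂ)
    (h : ∀ ψ ∈ Submodule.span ℂ (Set.range φ), star ψ ⬝ᵥ M.mulVec ψ = 0) (k l : Fin r) :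
    star (φ k) ⬝ᵥ M.mulVec (φ l) = 0 := by
  have hmem : ∀ k : Fin r, φ k ∈ Submodule.span ℂ (Set.range φ) :=
    fun k => Submodule.subset_span ⟨k, rfl⟩
  have hkk := h (φ k) (hmem k)
  have hll := h (φ l) (hmem l)
  have e1 := h (φ k + φ l) (add_mem (hmem k) (hmem l))
  have e2 := h (φ k + Complex.I • φ l) (add_mem (hmem k) (Submodule.smul_mem _ _ (hmem l)))
  rw [star_add, add_dotProduct, Matrix.mulVec_add, dotProduct_add, dotProduct_add,
    hkk, hll] at e1
  rw [star_add, star_smul, add_dotProduct, Matrix.mulVec_add, Matrix.mulVec_smul,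
    dotProduct_add, dotProduct_add, dotProduct_smul, dotProduct_smul, smul_dotProduct,
    smul_dotProduct, hkk, hll] at e2
  set a := star (φ k) ⬝ᵥ M.mulVec (φ l)
  set b := star (φ l) ⬝ᵥ M.mulVec (φ k)
  simp only [smul_eq_mul, zero_add, add_zero, mul_zero, RCLike.star_def, Complex.conj_I] at e1 e2
  linear_combination e1 / 2 - Complex.I / 2 * e2 + (a - b) / 2 * Complex.I_sq

private lemma core' {d : ℕ} (S : Matrix (Fin d) (Fin d) ℂ)
    (hSreal : ∀ i j, star (S i j) = S i j) (hSsym : ∀ i j, S i j = S j i)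
    (hSdet : IsUnit S.det) (A : Matrix (Fin d) (Fin d) ℂ) :
    ∃ t : ℝ, 0 ≤ t ∧
      ((∑ μ, ∑ ν, ∑ α, ∑ β, (S * S) μ α * (S * S) ν β * (A μ ν * star (A α β))) = (t : ℂ)) ∧
      (t = 0 ↔ A = 0) := by
  classical
  set B : Matrix (Fin d) (Fin d) ℂ := S * S with hB
  set N : Matrix (Fin d) (Fin d) ℂ := A * B * Aᴴ with hN
  set M : Matrix (Fin d) (Fin d) ℂ := S * A * S with hM
  have hSH : Sᴴ = S := by
    ext i j; rw [conjTranspose_apply, hSreal, hSsym]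
  have hBsym : ∀ μ α, B μ α = B α μ := by
    intro μ α
    simp only [hB, Matrix.mul_apply]
    exact Finset.sum_congr rfl fun j _ => by rw [hSsym μ j, hSsym j α, mul_comm]
  refine ⟨∑ i, ∑ j, Complex.normSq (M i j), ?_, ?_, ?_⟩
  · exact Finset.sum_nonneg fun i _ => Finset.sum_nonneg fun j _ => Complex.normSq_nonneg _
  · calc
      (∑ μ, ∑ ν, ∑ α, ∑ β, B μ α * B ν β * (A μ ν * star (A α β)))
          = ∑ μ, ∑ α, B μ α * N μ α := by
            have hNapply : ∀ μ α, N μ α = ∑ β, (∑ ν, A μ ν * B ν β) * star (A α β) := by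
              intro μ α
              simp only [hN, Matrix.mul_apply, conjTranspose_apply]
            refine Finset.sum_congr rfl fun μ _ => ?_
            rw [rot3']
            refine Finset.sum_congr rfl fun α _ => ?_
            rw [hNapply, Finset.mul_sum]
            refine Finset.sum_congr rfl fun β _ => ?_
            rw [Finset.sum_mul, Finset.mul_sum]
            exact Finset.sum_congr rfl fun ν _ => by ring
      _ = trace (B * N) := by
            rw [Finset.sum_comm]
            simp only [Matrix.trace, Matrix.diag, Matrix.mul_apply]
            exact Finset.sum_congr rfl fun μ _ => Finset.sum_congr rfl fun α _ => by
              rw [hBsym]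
      _ = trace (M * Mᴴ) := by
            have hMH : Mᴴ = S * Aᴴ * S := by
              simp only [hM, conjTranspose_mul, hSH, Matrix.mul_assoc]
            rw [hMH, hM, hN, hB]
            rw [show S * S * (A * (S * S) * Aᴴ) = S * (S * A * S * S * Aᴴ) by
              simp only [Matrix.mul_assoc]]
            rw [trace_mul_comm]
            simp only [Matrix.mul_assoc]
      _ = ((∑ i, ∑ j, Complex.normSq (M i j) : ℝ) : ℂ) := by
            simp only [Matrix.trace, Matrix.diag, Matrix.mul_apply, conjTranspose_apply]
            push_cast
            refine Finset.sum_congr rfl fun i _ => Finset.sum_congr rfl fun j _ => ?_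
            rw [RCLike.star_def, Complex.mul_conj]
  · constructor
    · intro ht
      have hM0 : M = 0 := by
        ext i j
        have h1 := (Finset.sum_eq_zero_iff_of_nonneg
          (fun i _ => Finset.sum_nonneg fun j _ => Complex.normSq_nonneg _)).mp ht i
          (Finset.mem_univ i)
        have h2 := (Finset.sum_eq_zero_iff_of_nonneg
          (fun j _ => Complex.normSq_nonneg _)).mp h1 j (Finset.mem_univ j)
        simpa using Complex.normSq_eq_zero.mp h2
      have hA : A = S⁻¹ * M * S⁻¹ := by
        rw [hM]
        rw [show S⁻¹ * (S * A * S) * S⁻¹ = (S⁻¹ * S) * A * (S * S⁻¹) by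
          simp only [Matrix.mul_assoc]]
        rw [Matrix.nonsing_inv_mul _ hSdet, Matrix.mul_nonsing_inv _ hSdet, Matrix.one_mul,
          Matrix.mul_one]
      rw [hA, hM0, Matrix.mul_zero, Matrix.zero_mul]
    · intro hA0
      have : M = 0 := by rw [hM, hA0, Matrix.mul_zero, Matrix.zero_mul]
      simp [this]

private lemma move6' {d r : ℕ} (F : Fin d → Fin d → Fin d → Fin d → Fin r → Fin r → ℂ) :
    (∑ μ, ∑ ν, ∑ α, ∑ β, ∑ ℓ, ∑ m, F μ ν α β ℓ m)
      = ∑ ℓ, ∑ m, ∑ μ, ∑ ν, ∑ α, ∑ β, F μ ν α β ℓ m :=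
  calc
    (∑ μ, ∑ ν, ∑ α, ∑ β, ∑ ℓ, ∑ m, F μ ν α β ℓ m)
        = ∑ μ, ∑ ν, ∑ α, ∑ ℓ, ∑ m, ∑ β, F μ ν α β ℓ m :=
          Finset.sum_congr rfl fun μ _ => Finset.sum_congr rfl fun ν _ =>
            Finset.sum_congr rfl fun α _ => rot3' _
    _ = ∑ μ, ∑ ν, ∑ ℓ, ∑ m, ∑ α, ∑ β, F μ ν α β ℓ m :=
          Finset.sum_congr rfl fun μ _ => Finset.sum_congr rfl fun ν _ => rot3' _
    _ = ∑ μ, ∑ ℓ, ∑ m, ∑ ν, ∑ α, ∑ β, F μ ν α β ℓ m :=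
          Finset.sum_congr rfl fun μ _ => rot3' _
    _ = ∑ ℓ, ∑ m, ∑ μ, ∑ ν, ∑ α, ∑ β, F μ ν α β ℓ m := rot3' _

/-- Theorem 2 of the paper. For a rank-`r` density matrix
`ρ = Σ_ℓ λ_ℓ |φ_ℓ⟩⟨φ_ℓ|` (`λ_ℓ > 0`, `φ_ℓ` orthonormal), Hermitian `G_μ` with SLDs
`L_μ = 2 G_μ`, and a symmetric positive definite Bures metric `g`, the spectral-decomposition
curvature measure `𝒞` vanishes if and only if the partial commutativity condition
`⟨ψ, [L_μ, L_ν] ψ⟩ = 0` holds for every `ψ` in the support `span{φ_1, …, φ_r}` of `ρ`. -/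
theorem curvMeasure_zero_iff_PCC {d n r : ℕ}
    (lam : Fin r → ℝ) (hlam : ∀ ℓ, 0 < lam ℓ)
    (φ : Fin r → (Fin n → ℂ))
    (hortho : ∀ k l, star (φ k) ⬝ᵥ φ l = if k = l then (1 : ℂ) else 0)
    (ρ : Matrix (Fin n) (Fin n) ℂ)
    (hρ : ρ = ∑ ℓ : Fin r, ((lam ℓ : ℝ) : ℂ) • Matrix.vecMulVec (φ ℓ) (star (φ ℓ)))
    (G : Fin d → Matrix (Fin n) (Fin n) ℂ) (hG : ∀ μ, (G μ).IsHermitian)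
    (g : Matrix (Fin d) (Fin d) ℝ) (hgsymm : g.IsSymm) (hgpos : g.PosDef)
    (L : Fin d → Matrix (Fin n) (Fin n) ℂ) (hL : ∀ μ, L μ = (2 : ℂ) • G μ) :
    (-∑ μ : Fin d, ∑ ν : Fin d, ∑ α : Fin d, ∑ β : Fin d,
        ((g⁻¹ μ α : ℝ) : ℂ) * ((g⁻¹ ν β : ℝ) : ℂ) *
          ∑ ℓ : Fin r, ∑ m : Fin r,
            ((lam ℓ * lam m / (lam ℓ + lam m) ^ 2 : ℝ) : ℂ) *
              (star (φ ℓ) ⬝ᵥ (G μ * G ν - G ν * G μ).mulVec (φ m)) *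
              (star (φ m) ⬝ᵥ (G α * G β - G β * G α).mulVec (φ ℓ)) = 0)
    ↔ ∀ ψ ∈ Submodule.span ℂ (Set.range φ), ∀ μ ν : Fin d,
        star ψ ⬝ᵥ (L μ * L ν - L ν * L μ).mulVec ψ = 0 := by
  classical
  -- abbreviations
  set K : Fin d → Fin d → Matrix (Fin n) (Fin n) ℂ :=
    fun μ ν => G μ * G ν - G ν * G μ with hKdef
  have hKskew : ∀ μ ν, (K μ ν)ᴴ = -(K μ ν) := by
    intro μ ν
    simp only [hKdef, conjTranspose_sub, conjTranspose_mul, (hG μ).eq, (hG ν).eq, neg_sub]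
  have hswap : ∀ (ℓ m : Fin r) (α β : Fin d),
      star (φ m) ⬝ᵥ (K α β).mulVec (φ ℓ)
        = -star (star (φ ℓ) ⬝ᵥ (K α β).mulVec (φ m)) := by
    intro ℓ m α β
    rw [starform', hKskew, Matrix.neg_mulVec, dotProduct_neg, neg_neg]
  -- the square root of g⁻¹
  have hC : (g⁻¹).PosDef := hgpos.inv
  set Sr : Matrix (Fin d) (Fin d) ℝ := CFC.sqrt (g⁻¹) with hSrdef
  have hSr2 : Sr * Sr = g⁻¹ := CFC.sqrt_mul_sqrt_self _ hC.posSemidef.nonneg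
  have hSrH : Sr.IsHermitian := (CFC.sqrt_nonneg (g⁻¹)).posSemidef.isHermitian
  have hSrsym : ∀ i j, Sr i j = Sr j i := by
    intro i j
    simpa using hSrH.apply j i
  have hSrdet : Sr.det ≠ 0 := by
    intro h0
    have : (g⁻¹).det = 0 := by rw [← hSr2, det_mul, h0, mul_zero]
    exact (ne_of_gt hC.det_pos) this
  set S : Matrix (Fin d) (Fin d) ℂ := Sr.map Complex.ofRealHom with hSdef
  have hSreal : ∀ i j, star (S i j) = S i j := by
    intro i j
    simp [hSdef, Matrix.map_apply, Complex.conj_ofReal]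
  have hSsym : ∀ i j, S i j = S j i := by
    intro i j
    simp [hSdef, Matrix.map_apply, hSrsym i j]
  have hSdet : IsUnit S.det := by
    have hd : S.det = Complex.ofRealHom Sr.det := by
      rw [hSdef, ← RingHom.mapMatrix_apply]
      exact (RingHom.map_det _ _).symm
    rw [hd]
    simpa [isUnit_iff_ne_zero] using hSrdet
  have hSS : ∀ μ α, (S * S) μ α = ((g⁻¹ μ α : ℝ) : ℂ) := by
    intro μ α
    rw [hSdef, ← Matrix.map_mul, hSr2]
    rfl
  -- the entry matrices
  set A : Fin r → Fin r → Matrix (Fin d) (Fin d) ℂ :=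
    fun ℓ m => Matrix.of fun μ ν => star (φ ℓ) ⬝ᵥ (K μ ν).mulVec (φ m) with hAdef
  choose t ht0 hteq htiff using fun ℓ m => core' S hSreal hSsym hSdet (A ℓ m)
  set w : Fin r → Fin r → ℝ := fun ℓ m => lam ℓ * lam m / (lam ℓ + lam m) ^ 2 with hwdef
  have hw : ∀ ℓ m, 0 < w ℓ m := by
    intro ℓ m
    exact div_pos (mul_pos (hlam ℓ) (hlam m))
      (pow_pos (add_pos (hlam ℓ) (hlam m)) 2)
  -- key computation
  have key : (-∑ μ : Fin d, ∑ ν : Fin d, ∑ α : Fin d, ∑ β : Fin d,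
        ((g⁻¹ μ α : ℝ) : ℂ) * ((g⁻¹ ν β : ℝ) : ℂ) *
          ∑ ℓ : Fin r, ∑ m : Fin r,
            ((lam ℓ * lam m / (lam ℓ + lam m) ^ 2 : ℝ) : ℂ) *
              (star (φ ℓ) ⬝ᵥ (K μ ν).mulVec (φ m)) *
              (star (φ m) ⬝ᵥ (K α β).mulVec (φ ℓ)))
      = ((∑ ℓ, ∑ m, w ℓ m * t ℓ m : ℝ) : ℂ) := by
    calc
      (-∑ μ : Fin d, ∑ ν : Fin d, ∑ α : Fin d, ∑ β : Fin d,
        ((g⁻¹ μ α : ℝ) : ℂ) * ((g⁻¹ ν β : ℝ) : ℂ) *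
          ∑ ℓ : Fin r, ∑ m : Fin r,
            ((lam ℓ * lam m / (lam ℓ + lam m) ^ 2 : ℝ) : ℂ) *
              (star (φ ℓ) ⬝ᵥ (K μ ν).mulVec (φ m)) *
              (star (φ m) ⬝ᵥ (K α β).mulVec (φ ℓ)))
          = ∑ μ : Fin d, ∑ ν : Fin d, ∑ α : Fin d, ∑ β : Fin d, ∑ ℓ : Fin r, ∑ m : Fin r,
              ((w ℓ m : ℝ) : ℂ) *
                (((g⁻¹ μ α : ℝ) : ℂ) * ((g⁻¹ ν β : ℝ) : ℂ) *
                  ((A ℓ m) μ ν * star ((A ℓ m) α β))) := by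
            simp only [Finset.mul_sum, ← Finset.sum_neg_distrib]
            refine Finset.sum_congr rfl fun μ _ => Finset.sum_congr rfl fun ν _ =>
              Finset.sum_congr rfl fun α _ => Finset.sum_congr rfl fun β _ =>
              Finset.sum_congr rfl fun ℓ _ => Finset.sum_congr rfl fun m _ => ?_
            have h2 := hswap ℓ m α β
            have hA1 : (A ℓ m) μ ν = star (φ ℓ) ⬝ᵥ (K μ ν).mulVec (φ m) := rfl
            have hA2 : (A ℓ m) α β = star (φ ℓ) ⬝ᵥ (K α β).mulVec (φ m) := rfl
            rw [hA1, hA2]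
            linear_combination (-(((g⁻¹ μ α : ℝ) : ℂ) * ((g⁻¹ ν β : ℝ) : ℂ) *
              ((w ℓ m : ℝ) : ℂ) * (star (φ ℓ) ⬝ᵥ (K μ ν).mulVec (φ m)))) * h2
      _ = ∑ ℓ : Fin r, ∑ m : Fin r, ∑ μ : Fin d, ∑ ν : Fin d, ∑ α : Fin d, ∑ β : Fin d,
              ((w ℓ m : ℝ) : ℂ) *
                (((g⁻¹ μ α : ℝ) : ℂ) * ((g⁻¹ ν β : ℝ) : ℂ) *
                  ((A ℓ m) μ ν * star ((A ℓ m) α β))) := move6' _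
      _ = ∑ ℓ, ∑ m, ((w ℓ m : ℝ) : ℂ) * ((t ℓ m : ℝ) : ℂ) := by
            refine Finset.sum_congr rfl fun ℓ _ => Finset.sum_congr rfl fun m _ => ?_
            rw [← hteq ℓ m]
            simp only [Finset.mul_sum]
            refine Finset.sum_congr rfl fun μ _ => Finset.sum_congr rfl fun ν _ =>
              Finset.sum_congr rfl fun α _ => Finset.sum_congr rfl fun β _ => ?_
            rw [hSS μ α, hSS ν β]
      _ = ((∑ ℓ, ∑ m, w ℓ m * t ℓ m : ℝ) : ℂ) := by push_cast; rfl
  have key' : (-∑ μ : Fin d, ∑ ν : Fin d, ∑ α : Fin d, ∑ β : Fin d,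
        ((g⁻¹ μ α : ℝ) : ℂ) * ((g⁻¹ ν β : ℝ) : ℂ) *
          ∑ ℓ : Fin r, ∑ m : Fin r,
            ((lam ℓ * lam m / (lam ℓ + lam m) ^ 2 : ℝ) : ℂ) *
              (star (φ ℓ) ⬝ᵥ (G μ * G ν - G ν * G μ).mulVec (φ m)) *
              (star (φ m) ⬝ᵥ (G α * G β - G β * G α).mulVec (φ ℓ)))
      = ((∑ ℓ, ∑ m, w ℓ m * t ℓ m : ℝ) : ℂ) := key
  rw [key']
  -- now the right-hand side
  have hLK : ∀ μ ν, L μ * L ν - L ν * L μ = (4 : ℂ) • K μ ν := by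
    intro μ ν
    rw [hL, hL, hKdef]
    rw [Matrix.smul_mul, Matrix.smul_mul, Matrix.mul_smul, Matrix.mul_smul,
      smul_smul, smul_smul, ← smul_sub]
    norm_num
  have hquadL : ∀ (ψ : Fin n → ℂ) (μ ν : Fin d),
      star ψ ⬝ᵥ (L μ * L ν - L ν * L μ).mulVec ψ
        = 4 * (star ψ ⬝ᵥ (K μ ν).mulVec ψ) := by
    intro ψ μ ν
    rw [hLK, smul_mulVec, dotProduct_smul, smul_eq_mul]
  constructor
  · -- 𝒞 = 0 → PCC
    intro h0 ψ hψ μ ν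
    rw [hquadL]
    have hreal : (∑ ℓ, ∑ m, w ℓ m * t ℓ m : ℝ) = 0 := by
      exact_mod_cast h0
    have hterm : ∀ ℓ m, w ℓ m * t ℓ m = 0 := by
      intro ℓ m
      have h1 := (Finset.sum_eq_zero_iff_of_nonneg
        (fun ℓ _ => Finset.sum_nonneg fun m _ =>
          mul_nonneg (hw ℓ m).le (ht0 ℓ m))).mp hreal ℓ (Finset.mem_univ ℓ)
      exact (Finset.sum_eq_zero_iff_of_nonneg
        (fun m _ => mul_nonneg (hw ℓ m).le (ht0 ℓ m))).mp h1 m (Finset.mem_univ m)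
    have hA0 : ∀ ℓ m, A ℓ m = 0 := by
      intro ℓ m
      refine (htiff ℓ m).mp ?_
      have := hterm ℓ m
      rcases mul_eq_zero.mp this with h | h
      · exact absurd h (ne_of_gt (hw ℓ m))
      · exact h
    have hent : ∀ k l, star (φ k) ⬝ᵥ (K μ ν).mulVec (φ l) = 0 := by
      intro k l
      have := congrFun (congrFun (hA0 k l) μ) ν
      exact this
    rw [quad_of_entries' (K μ ν) φ hent ψ hψ ψ hψ, mul_zero]
  · -- PCC → 𝒞 = 0
    intro hpcc
    have hent : ∀ (μ ν : Fin d) (k l : Fin r),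
        star (φ k) ⬝ᵥ (K μ ν).mulVec (φ l) = 0 := by
      intro μ ν k l
      refine entries_of_quad' (K μ ν) φ (fun ψ hψ => ?_) k l
      have := hpcc ψ hψ μ ν
      rw [hquadL] at this
      have h4 : (4 : ℂ) ≠ 0 := by norm_num
      exact (mul_eq_zero.mp this).resolve_left h4
    have hA0 : ∀ ℓ m, A ℓ m = 0 := by
      intro ℓ m
      ext μ ν
      exact hent μ ν ℓ m
    have ht00 : ∀ ℓ m, t ℓ m = 0 := fun ℓ m => (htiff ℓ m).mpr (hA0 ℓ m)
    have : (∑ ℓ, ∑ m, w ℓ m * t ℓ m : ℝ) = 0 := by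
      simp [ht00]
    exact_mod_cast this
end

section
/- Let ψ ∈ ℂⁿ be a unit vector and let G₁, G₂ ∈ Matrix (Fin n) (Fin n) ℂ be Hermitian. Define the Bures metric tensor g_{μν} := Re⟨ψ, G_μ G_ν ψ⟩ for μ, ν ∈ {1,2}, and assume g is positive definite; let g^{μν} be the entries of its inverse and define G^μ := Σ_α g^{μα} G_α. Define the curvature measure 𝒞 := Σ_{μ,ν=1}^2 Im⟨ψ, G_μ G_ν ψ⟩ · Im⟨ψ, G^μ G^ν ψ⟩ and the incompatibility factor γ := |Im⟨ψ, G₁ G₂ ψ⟩|² / det g. Then 𝒞 = 2γ; in particular each summand Im⟨ψ, G_μ G_ν ψ⟩ · Im⟨ψ, G^μ G^ν ψ⟩ is nonnegative. -/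
open Matrix

/-- Theorem 3 of the paper. For a two-parameter pure-state model with unit
vector `ψ` and Hermitian `G₁, G₂`, with Bures metric `g_{μν} = Re⟨ψ, G_μ G_ν ψ⟩` assumed
positive definite and raised indices `G^μ = Σ_α g^{μα} G_α`, the curvature measure
`𝒞 = Σ_{μν} Im⟨ψ, G_μ G_ν ψ⟩ · Im⟨ψ, G^μ G^ν ψ⟩` equals twice the incompatibility factor
`γ = |Im⟨ψ, G₁ G₂ ψ⟩|² / det g`; in particular each summand is nonnegative. -/
theorem pure_state_curvature_eq_twice_incompatibility {n : ℕ}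
    (ψ : Fin n → ℂ) (hψ : star ψ ⬝ᵥ ψ = 1)
    (G : Fin 2 → Matrix (Fin n) (Fin n) ℂ) (hG : ∀ μ, (G μ).IsHermitian)
    (g : Matrix (Fin 2) (Fin 2) ℝ)
    (hg : g = Matrix.of fun μ ν => (star ψ ⬝ᵥ (G μ * G ν).mulVec ψ).re)
    (hgpos : g.PosDef)
    (Gup : Fin 2 → Matrix (Fin n) (Fin n) ℂ)
    (hGup : ∀ μ, Gup μ = ∑ α : Fin 2, ((g⁻¹ μ α : ℝ) : ℂ) • G α) :
    (∑ μ : Fin 2, ∑ ν : Fin 2,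
        (star ψ ⬝ᵥ (G μ * G ν).mulVec ψ).im * (star ψ ⬝ᵥ (Gup μ * Gup ν).mulVec ψ).im)
      = 2 * ((star ψ ⬝ᵥ (G 0 * G 1).mulVec ψ).im ^ 2 / g.det)
    ∧ ∀ μ ν : Fin 2,
        0 ≤ (star ψ ⬝ᵥ (G μ * G ν).mulVec ψ).im * (star ψ ⬝ᵥ (Gup μ * Gup ν).mulVec ψ).im := by
  have hd : 0 < g.det := hgpos.det_pos
  -- conjugate symmetry of the sesquilinear coefficients
  have hsym : ∀ μ ν : Fin 2, (star ψ ⬝ᵥ (G ν * G μ).mulVec ψ)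
      = star (star ψ ⬝ᵥ (G μ * G ν).mulVec ψ) := by
    intro μ ν
    have h1 : (G μ * G ν)ᴴ = G ν * G μ := by
      rw [Matrix.conjTranspose_mul, (hG μ).eq, (hG ν).eq]
    calc star ψ ⬝ᵥ (G ν * G μ).mulVec ψ
        = star ψ ⬝ᵥ ((G μ * G ν)ᴴ).mulVec ψ := by rw [h1]
    _ = star (star ψ ⬝ᵥ (G μ * G ν).mulVec ψ) := by
        rw [Matrix.star_dotProduct, Matrix.star_mulVec,
          Matrix.conjTranspose_conjTranspose, ← Matrix.dotProduct_mulVec]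
  have hdiag : ∀ μ : Fin 2, (star ψ ⬝ᵥ (G μ * G μ).mulVec ψ).im = 0 := by
    intro μ
    have h2 := congrArg Complex.im (hsym μ μ)
    simp only [Complex.star_def, Complex.conj_im] at h2
    linarith
  have hoff : (star ψ ⬝ᵥ (G 1 * G 0).mulVec ψ).im
      = -(star ψ ⬝ᵥ (G 0 * G 1).mulVec ψ).im := by
    have h2 := congrArg Complex.im (hsym 0 1)
    simpa [Complex.star_def, Complex.conj_im] using h2
  -- expansion of the raised-index pairings
  have hexp : ∀ μ ν : Fin 2, (star ψ ⬝ᵥ (Gup μ * Gup ν).mulVec ψ).im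
      = (g⁻¹ μ 0 * g⁻¹ ν 1 - g⁻¹ μ 1 * g⁻¹ ν 0)
          * (star ψ ⬝ᵥ (G 0 * G 1).mulVec ψ).im := by
    intro μ ν
    have h1 : Gup μ * Gup ν
        = ∑ α : Fin 2, ∑ β : Fin 2,
            ((((g⁻¹ μ α : ℝ)) : ℂ) * ((g⁻¹ ν β : ℝ) : ℂ)) • (G α * G β) := by
      rw [hGup, hGup, Finset.sum_mul_sum]
      simp only [Matrix.smul_mul, Matrix.mul_smul, smul_smul]
      ext i j
      simp [Complex.real_smul, Matrix.add_apply, Matrix.smul_apply]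
      ring
    rw [h1]
    simp only [Fin.sum_univ_two, Matrix.add_mulVec, Matrix.smul_mulVec,
      dotProduct_add, dotProduct_smul, smul_eq_mul, Complex.add_im, Complex.mul_im,
      Complex.mul_re, Complex.ofReal_re, Complex.ofReal_im, hdiag, hoff]
    ring
  -- determinant identity for the 2×2 inverse
  have hdetinv : g⁻¹ 0 0 * g⁻¹ 1 1 - g⁻¹ 0 1 * g⁻¹ 1 0 = (g.det)⁻¹ := by
    calc g⁻¹ 0 0 * g⁻¹ 1 1 - g⁻¹ 0 1 * g⁻¹ 1 0 = g⁻¹.det := (Matrix.det_fin_two _).symm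
    _ = Ring.inverse g.det := g.det_nonsing_inv
    _ = (g.det)⁻¹ := by simp [Ring.inverse_eq_inv']
  have hdinv : (0:ℝ) ≤ (g.det)⁻¹ := (inv_pos.mpr hd).le
  constructor
  · simp only [Fin.sum_univ_two, hexp, hdiag, hoff]
    linear_combination (2 * (star ψ ⬝ᵥ (G 0 * G 1).mulVec ψ).im ^ 2) * hdetinv
  · intro μ ν
    fin_cases μ <;> fin_cases ν <;>
      simp only [Fin.isValue, Fin.zero_eta, Fin.mk_one, hexp, hdiag, hoff]
    · simp
    · rw [hdetinv]; nlinarith [sq_nonneg (star ψ ⬝ᵥ (G 0 * G 1).mulVec ψ).im]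
    · have h' : g⁻¹ 1 0 * g⁻¹ 0 1 - g⁻¹ 1 1 * g⁻¹ 0 0 = -(g.det)⁻¹ := by
        linear_combination -hdetinv
      rw [h']; nlinarith [sq_nonneg (star ψ ⬝ᵥ (G 0 * G 1).mulVec ψ).im]
    · simp
end

section
/- For real parameters a and b with b > 0, define G₁(a,b) := (1/2)[[0, −i e^{−b−ia}],[i e^{−b+ia}, 0]] and G₂(a,b) := (1/(2(e^{2b}−1)))[[1, −e^{b−ia}],[−e^{b+ia}, 1]]. Then the dual curvature component F̃₁₂ := ∂G₂/∂a − ∂G₁/∂b − [G₁, G₂] equals (−i/(2(e^{2b}−1))) [[1, −e^{−b−ia}],[e^{−b+ia}, −1]] for all (a,b) with b > 0. -/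
open Matrix Complex

/-- The component `G₁` of the Hermitian 1-form for the parameter `a` in the qubit
phase/phase-diffusion model. -/
noncomputable def G1AB (a b : ℝ) : Matrix (Fin 2) (Fin 2) ℂ :=
  (1/2 : ℂ) • !![0, -Complex.I * Complex.exp (-(b : ℂ) - Complex.I * a);
                 Complex.I * Complex.exp (-(b : ℂ) + Complex.I * a), 0]

/-- The component `G₂` of the Hermitian 1-form for the parameter `b` in the qubit
phase/phase-diffusion model. -/
noncomputable def G2AB (a b : ℝ) : Matrix (Fin 2) (Fin 2) ℂ :=
  (1 / (2 * (Complex.exp (2 * (b : ℂ)) - 1))) •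
    !![1, -Complex.exp ((b : ℂ) - Complex.I * a);
       -Complex.exp ((b : ℂ) + Complex.I * a), 1]

/-- Entrywise partial derivative with respect to the first parameter `a`. -/
noncomputable def pderivA (f : ℝ → ℝ → Matrix (Fin 2) (Fin 2) ℂ) (a b : ℝ) :
    Matrix (Fin 2) (Fin 2) ℂ :=
  Matrix.of fun i j => deriv (fun t : ℝ => f t b i j) a

/-- Entrywise partial derivative with respect to the second parameter `b`. -/
noncomputable def pderivB (f : ℝ → ℝ → Matrix (Fin 2) (Fin 2) ℂ) (a b : ℝ) :
    Matrix (Fin 2) (Fin 2) ℂ :=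
  Matrix.of fun i j => deriv (fun t : ℝ => f a t i j) b

lemma hasDerivAt_exp_affine (u v : ℂ) (a : ℝ) :
    HasDerivAt (fun t : ℝ => Complex.exp (u + v * t)) (Complex.exp (u + v * a) * v) a := by
  have h1 : HasDerivAt (fun t : ℝ => u + v * (t:ℂ)) v a := by
    simpa using ((Complex.ofRealCLM.hasDerivAt (x := a)).const_mul v).const_add u
  simpa using h1.cexp

lemma deriv_const_mul_exp_affine (c u v : ℂ) (a : ℝ) :
    deriv (fun t : ℝ => c * Complex.exp (u + v * t)) a
      = c * (Complex.exp (u + v * a) * v) :=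
  ((hasDerivAt_exp_affine u v a).const_mul c).deriv

lemma pderivA_G2AB (a b : ℝ) :
    pderivA G2AB a b
      = !![0, (-(1 / (2 * (Complex.exp (2 * (b : ℂ)) - 1))))
              * (Complex.exp ((b : ℂ) + (-Complex.I) * a) * (-Complex.I));
          (-(1 / (2 * (Complex.exp (2 * (b : ℂ)) - 1))))
              * (Complex.exp ((b : ℂ) + Complex.I * a) * Complex.I), 0] := by
  have e00 : (fun t : ℝ => G2AB t b 0 0)
      = fun _ : ℝ => 1 / (2 * (Complex.exp (2 * (b : ℂ)) - 1)) := by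
    funext t; simp [G2AB]
  have e11 : (fun t : ℝ => G2AB t b 1 1)
      = fun _ : ℝ => 1 / (2 * (Complex.exp (2 * (b : ℂ)) - 1)) := by
    funext t; simp [G2AB]
  have e01 : (fun t : ℝ => G2AB t b 0 1)
      = fun t : ℝ => (-(1 / (2 * (Complex.exp (2 * (b : ℂ)) - 1))))
          * Complex.exp ((b : ℂ) + (-Complex.I) * t) := by
    funext t
    simp [G2AB, show (b:ℂ) - Complex.I * t = (b:ℂ) + (-Complex.I) * t from by ring]
  have e10 : (fun t : ℝ => G2AB t b 1 0)
      = fun t : ℝ => (-(1 / (2 * (Complex.exp (2 * (b : ℂ)) - 1))))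
          * Complex.exp ((b : ℂ) + Complex.I * t) := by
    funext t; simp [G2AB]
  ext i j
  fin_cases i <;> fin_cases j <;>
    simp only [pderivA, Matrix.of_apply, Matrix.cons_val', Matrix.cons_val_zero,
      Matrix.cons_val_one, Matrix.head_cons, Matrix.empty_val', Matrix.cons_val_fin_one,
      Matrix.head_fin_const, Fin.isValue, Fin.mk_zero, Fin.mk_one]
  · rw [e00, deriv_const]
  · rw [e01, deriv_const_mul_exp_affine]
  · rw [e10, deriv_const_mul_exp_affine]
  · rw [e11, deriv_const]

lemma pderivB_G1AB (a b : ℝ) :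
    pderivB G1AB a b
      = !![0, ((1:ℂ)/2 * -Complex.I)
              * (Complex.exp ((-Complex.I * a) + (-1) * b) * (-1));
          ((1:ℂ)/2 * Complex.I)
              * (Complex.exp ((Complex.I * a) + (-1) * b) * (-1)), 0] := by
  have e00 : (fun t : ℝ => G1AB a t 0 0) = fun _ : ℝ => (0:ℂ) := by
    funext t; simp [G1AB]
  have e11 : (fun t : ℝ => G1AB a t 1 1) = fun _ : ℝ => (0:ℂ) := by
    funext t; simp [G1AB]
  have e01 : (fun t : ℝ => G1AB a t 0 1)
      = fun t : ℝ => ((1:ℂ)/2 * -Complex.I)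
          * Complex.exp ((-Complex.I * a) + (-1) * t) := by
    funext t
    simp [G1AB, show -(t:ℂ) - Complex.I * a = (-Complex.I * a) + (-1) * t from by ring]
    ring
  have e10 : (fun t : ℝ => G1AB a t 1 0)
      = fun t : ℝ => ((1:ℂ)/2 * Complex.I)
          * Complex.exp ((Complex.I * a) + (-1) * t) := by
    funext t
    simp [G1AB, show -(t:ℂ) + Complex.I * a = (Complex.I * a) + (-1) * t from by ring]
    ring
  ext i j
  fin_cases i <;> fin_cases j <;>
    simp only [pderivB, Matrix.of_apply, Matrix.cons_val', Matrix.cons_val_zero,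
      Matrix.cons_val_one, Matrix.head_cons, Matrix.empty_val', Matrix.cons_val_fin_one,
      Matrix.head_fin_const, Fin.isValue, Fin.mk_zero, Fin.mk_one]
  · rw [e00, deriv_const]
  · rw [e01, deriv_const_mul_exp_affine]
  · rw [e10, deriv_const_mul_exp_affine]
  · rw [e11, deriv_const]

set_option maxHeartbeats 1000000 in
/-- For the qubit phase/phase-diffusion model with `b > 0`, the dual
curvature component `F̃₁₂ = ∂G₂/∂a − ∂G₁/∂b − [G₁, G₂]` equals
`(−i/(2(e^{2b} − 1))) [[1, −e^{−b−ia}], [e^{−b+ia}, −1]]`. -/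
theorem qubit_model_dual_curvature (a b : ℝ) (hb : 0 < b) :
    pderivA G2AB a b - pderivB G1AB a b
      - (G1AB a b * G2AB a b - G2AB a b * G1AB a b)
    = (-Complex.I / (2 * (Complex.exp (2 * (b : ℂ)) - 1))) •
        !![1, -Complex.exp (-(b : ℂ) - Complex.I * a);
           Complex.exp (-(b : ℂ) + Complex.I * a), -1] := by
  have hE : Complex.exp ((b:ℂ)) ≠ 0 := Complex.exp_ne_zero _
  have hA : Complex.exp (Complex.I * (a:ℝ)) ≠ 0 := Complex.exp_ne_zero _
  have hne : Complex.exp ((b:ℂ)) * Complex.exp ((b:ℂ)) - 1 ≠ 0 := by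
    rw [← Complex.exp_add]
    intro h
    have h1 : Complex.exp ((b:ℂ) + (b:ℂ)) = 1 := by linear_combination h
    rw [show (b:ℂ) + (b:ℂ) = ((b + b : ℝ) : ℂ) by push_cast; ring, ← Complex.ofReal_exp] at h1
    have h2 : Real.exp (b + b) = 1 := by exact_mod_cast h1
    rw [Real.exp_eq_one_iff] at h2
    linarith
  have hx1 : Complex.exp (2 * (b:ℂ)) = Complex.exp ((b:ℂ)) * Complex.exp ((b:ℂ)) := by
    rw [← Complex.exp_add]; ring_nf
  have hx2 : Complex.exp (-(b:ℂ) - Complex.I * a)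
      = (Complex.exp ((b:ℂ)))⁻¹ * (Complex.exp (Complex.I * (a:ℝ)))⁻¹ := by
    rw [show -(b:ℂ) - Complex.I * a = -((b:ℂ)) + -(Complex.I * a) by ring,
      Complex.exp_add, Complex.exp_neg, Complex.exp_neg]
  have hx3 : Complex.exp (-(b:ℂ) + Complex.I * a)
      = (Complex.exp ((b:ℂ)))⁻¹ * Complex.exp (Complex.I * (a:ℝ)) := by
    rw [show -(b:ℂ) + Complex.I * a = -((b:ℂ)) + Complex.I * a by ring,
      Complex.exp_add, Complex.exp_neg]
  have hx4 : Complex.exp ((b:ℂ) - Complex.I * a)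
      = Complex.exp ((b:ℂ)) * (Complex.exp (Complex.I * (a:ℝ)))⁻¹ := by
    rw [show (b:ℂ) - Complex.I * a = (b:ℂ) + -(Complex.I * a) by ring,
      Complex.exp_add, Complex.exp_neg]
  have hx5 : Complex.exp ((b:ℂ) + Complex.I * a)
      = Complex.exp ((b:ℂ)) * Complex.exp (Complex.I * (a:ℝ)) := Complex.exp_add _ _
  have hx6 : Complex.exp ((b:ℂ) + -Complex.I * a)
      = Complex.exp ((b:ℂ)) * (Complex.exp (Complex.I * (a:ℝ)))⁻¹ := by
    rw [show (b:ℂ) + -Complex.I * a = (b:ℂ) + -(Complex.I * a) by ring,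
      Complex.exp_add, Complex.exp_neg]
  have hx7 : Complex.exp (-Complex.I * (a:ℝ) + (-1) * (b:ℝ))
      = (Complex.exp ((b:ℂ)))⁻¹ * (Complex.exp (Complex.I * (a:ℝ)))⁻¹ := by
    rw [show -Complex.I * (a:ℝ) + (-1 : ℂ) * (b:ℝ) = -((b:ℂ)) + -(Complex.I * a) by ring,
      Complex.exp_add, Complex.exp_neg, Complex.exp_neg]
  have hx8 : Complex.exp (Complex.I * (a:ℝ) + (-1) * (b:ℝ))
      = (Complex.exp ((b:ℂ)))⁻¹ * Complex.exp (Complex.I * (a:ℝ)) := by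
    rw [show Complex.I * (a:ℝ) + (-1 : ℂ) * (b:ℝ) = -((b:ℂ)) + Complex.I * a by ring,
      Complex.exp_add, Complex.exp_neg]
  have hne2 : -1 + Complex.exp (b:ℂ) ^ 2 ≠ 0 := by rw [pow_two, neg_add_eq_sub]; exact hne
  have hne3 : Complex.exp (b:ℂ) ^ 2 - 1 ≠ 0 := by rw [pow_two]; exact hne
  rw [pderivA_G2AB, pderivB_G1AB]
  ext i j
  fin_cases i <;> fin_cases j <;>
    simp only [G1AB, G2AB, Matrix.sub_apply, Matrix.smul_apply, Matrix.mul_apply,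
      Fin.sum_univ_succ, Fin.sum_univ_zero, smul_eq_mul, Matrix.cons_val', Matrix.cons_val_zero,
      Matrix.cons_val_one, Matrix.head_cons, Matrix.empty_val', Matrix.cons_val_fin_one,
      Matrix.head_fin_const, Fin.isValue, Fin.mk_zero, Fin.mk_one, add_zero,
      hx1, hx2, hx3, hx4, hx5, hx6, hx7, hx8, Matrix.of_apply, Matrix.cons_val_succ]
  all_goals field_simp
  all_goals
    try rw [div_eq_iff (by simp [mul_ne_zero_iff, hne, Complex.exp_ne_zero])]
  all_goals ring
end

section
/- For real parameters a and b with b > 0, define G₁(a,b) := (1/2)[[0, −i e^{−b−ia}],[i e^{−b+ia}, 0]], G₂(a,b) := (1/(2(e^{2b}−1)))[[1, −e^{b−ia}],[−e^{b+ia}, 1]], the dual curvature components F̃₁₂ := ∂G₂/∂a − ∂G₁/∂b − [G₁, G₂] and F̃₂₁ := −F̃₁₂, and the metric entries g₁₁ := e^{−2b}/4 and g₂₂ := 1/(4(e^{2b}−1)). Then the scalar curvature measure 𝒞 := −(1/(4 g₁₁ g₂₂)) (tr(F̃₁₂ F̃₁₂) + tr(F̃₂₁ F̃₂₁)) equals 4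 for all (a,b) with b > 0. -/
open Matrix Complex

lemma hasDerivAt_cexp_affine (c d : ℂ) (t : ℝ) :
    HasDerivAt (fun s : ℝ => Complex.exp (c + d * s)) (Complex.exp (c + d * t) * d) t := by
  have h1 : HasDerivAt (fun s : ℝ => c + d * (s : ℂ)) d t := by
    simpa using ((Complex.ofRealCLM.hasDerivAt (x := t)).const_mul d).const_add c
  simpa using h1.cexp

lemma pderivA_G2 (a b : ℝ) :
    pderivA G2AB a b = (1 / (2 * (Complex.exp (2 * (b : ℂ)) - 1))) •
      !![0, Complex.I * Complex.exp ((b : ℂ) - Complex.I * a);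
         -Complex.I * Complex.exp ((b : ℂ) + Complex.I * a), 0] := by
  ext i j
  fin_cases i <;> fin_cases j <;>
    simp only [pderivA, G2AB, Matrix.of_apply, Matrix.smul_apply, Matrix.cons_val',
      Matrix.cons_val_zero, Matrix.cons_val_one, Matrix.head_cons, Matrix.head_fin_const,
      Matrix.empty_val', Matrix.cons_val_fin_one, smul_eq_mul, Fin.isValue, Fin.mk_zero, Fin.mk_one]
  · simp
  · have h := ((hasDerivAt_cexp_affine (b : ℂ) (-Complex.I) a).neg.const_mul
      (1 / (2 * (Complex.exp (2 * (b : ℂ)) - 1)))).deriv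
    rw [show ((b : ℂ) - Complex.I * a) = (b : ℂ) + -Complex.I * a by ring]
    rw [show (fun t : ℝ => 1 / (2 * (Complex.exp (2 * (b : ℂ)) - 1)) *
        -Complex.exp ((b : ℂ) - Complex.I * t)) = fun t : ℝ =>
        1 / (2 * (Complex.exp (2 * (b : ℂ)) - 1)) * -Complex.exp ((b : ℂ) + -Complex.I * t) by
      funext t; ring_nf]
    simp only [Pi.neg_apply] at h; rw [h]; ring
  · have h := ((hasDerivAt_cexp_affine (b : ℂ) Complex.I a).neg.const_mul
      (1 / (2 * (Complex.exp (2 * (b : ℂ)) - 1)))).deriv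
    simp only [Pi.neg_apply] at h; rw [h]; ring
  · simp

lemma pderivB_G1 (a b : ℝ) :
    pderivB G1AB a b = (1/2 : ℂ) •
      !![0, Complex.I * Complex.exp (-(b : ℂ) - Complex.I * a);
         -Complex.I * Complex.exp (-(b : ℂ) + Complex.I * a), 0] := by
  ext i j
  fin_cases i <;> fin_cases j <;>
    simp only [pderivB, G1AB, Matrix.of_apply, Matrix.smul_apply, Matrix.cons_val',
      Matrix.cons_val_zero, Matrix.cons_val_one, Matrix.head_cons, Matrix.head_fin_const,
      Matrix.empty_val', Matrix.cons_val_fin_one, smul_eq_mul, Fin.isValue, Fin.mk_zero,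
      Fin.mk_one]
  · simp
  · have h := (((hasDerivAt_cexp_affine (-(Complex.I * a)) (-1 : ℂ) b).const_mul
      (-Complex.I)).const_mul (1/2 : ℂ)).deriv
    rw [show (-(b : ℂ) - Complex.I * a) = -(Complex.I * a) + (-1 : ℂ) * b by ring]
    rw [show (fun t : ℝ => (1/2 : ℂ) * (-Complex.I * Complex.exp (-(t : ℂ) - Complex.I * a)))
        = fun t : ℝ => (1/2 : ℂ) *
          (-Complex.I * Complex.exp (-(Complex.I * a) + (-1 : ℂ) * t)) by
      funext t; ring_nf]
    rw [h]; ring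
  · have h := (((hasDerivAt_cexp_affine (Complex.I * a) (-1 : ℂ) b).const_mul
      Complex.I).const_mul (1/2 : ℂ)).deriv
    rw [show (-(b : ℂ) + Complex.I * a) = Complex.I * a + (-1 : ℂ) * b by ring]
    rw [show (fun t : ℝ => (1/2 : ℂ) * (Complex.I * Complex.exp (-(t : ℂ) + Complex.I * a)))
        = fun t : ℝ => (1/2 : ℂ) *
          (Complex.I * Complex.exp (Complex.I * a + (-1 : ℂ) * t)) by
      funext t; ring_nf]
    rw [h]; ring
  · simp

/-- The dual curvature component `F̃₁₂ = ∂G₂/∂a − ∂G₁/∂b − [G₁, G₂]`. -/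
noncomputable def Ftilde12 (a b : ℝ) : Matrix (Fin 2) (Fin 2) ℂ :=
  pderivA G2AB a b - pderivB G1AB a b - (G1AB a b * G2AB a b - G2AB a b * G1AB a b)

set_option maxHeartbeats 2000000 in
/-- For the qubit phase/phase-diffusion model with `b > 0`, with diagonal
Bures metric entries `g₁₁ = e^{−2b}/4` and `g₂₂ = 1/(4(e^{2b} − 1))`, the scalar curvature
measure `𝒞 = −(1/(4 g₁₁ g₂₂)) (tr(F̃₁₂ F̃₁₂) + tr(F̃₂₁ F̃₂₁))` with `F̃₂₁ = −F̃₁₂`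
equals `4`. -/
theorem qubit_model_curvature_measure (a b : ℝ) (hb : 0 < b) :
    -(1 / (4 * ((Real.exp (-(2 * b)) / 4 : ℝ) : ℂ)
              * ((1 / (4 * (Real.exp (2 * b) - 1)) : ℝ) : ℂ)))
        * (Matrix.trace (Ftilde12 a b * Ftilde12 a b)
            + Matrix.trace ((-Ftilde12 a b) * (-Ftilde12 a b)))
      = 4 := by
  set E : ℂ := Complex.exp (b : ℂ) with hE
  set V : ℂ := Complex.exp (Complex.I * a) with hV
  have h1 : Complex.exp (-(b : ℂ) - Complex.I * a) = (E * V)⁻¹ := by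
    rw [show -(b : ℂ) - Complex.I * a = -((b : ℂ) + Complex.I * a) by ring,
      Complex.exp_neg, Complex.exp_add]
  have h2 : Complex.exp (-(b : ℂ) + Complex.I * a) = E⁻¹ * V := by
    rw [Complex.exp_add, Complex.exp_neg]
  have h3 : Complex.exp ((b : ℂ) - Complex.I * a) = E * V⁻¹ := by
    rw [Complex.exp_sub, div_eq_mul_inv]
  have h4 : Complex.exp ((b : ℂ) + Complex.I * a) = E * V := by
    rw [Complex.exp_add]
  have h5 : Complex.exp (2 * (b : ℂ)) = E ^ 2 := by
    rw [two_mul, Complex.exp_add]; ring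
  have hEne : E ≠ 0 := Complex.exp_ne_zero _
  have hVne : V ≠ 0 := Complex.exp_ne_zero _
  have hre : Real.exp (2 * b) - 1 ≠ 0 := by
    have h : (1 : ℝ) < Real.exp (2 * b) := by
      have := Real.exp_lt_exp.mpr (show (0 : ℝ) < 2 * b by positivity)
      simpa using this
    linarith
  have hpre : ((Real.exp (2 * b) : ℝ) : ℂ) = E ^ 2 := by
    rw [Complex.ofReal_exp, ← h5]
    congr 1
    push_cast
    ring
  have hnre : ((Real.exp (-(2 * b)) : ℝ) : ℂ) = (E ^ 2)⁻¹ := by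
    rw [Complex.ofReal_exp,
      show ((-(2 * b) : ℝ) : ℂ) = -(2 * (b : ℂ)) by push_cast; ring,
      Complex.exp_neg, h5]
  have hE2 : E ^ 2 - 1 ≠ 0 := by
    intro hc
    apply hre
    have h0 : ((Real.exp (2 * b) - 1 : ℝ) : ℂ) = 0 := by push_cast [hpre]; exact hc
    exact_mod_cast h0
  have hF : Ftilde12 a b = (1 / (2 * (E ^ 2 - 1))) •
      !![-Complex.I, Complex.I * E⁻¹ * V⁻¹; -Complex.I * E⁻¹ * V, Complex.I] := by
    ext i j
    fin_cases i <;> fin_cases j <;>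
      simp only [Ftilde12, pderivA_G2, pderivB_G1, G1AB, G2AB,
        Matrix.mul_apply, Fin.sum_univ_two, Matrix.sub_apply, Matrix.smul_apply,
        Matrix.of_apply, Matrix.cons_val', Matrix.cons_val_zero, Matrix.cons_val_one,
        Matrix.head_cons, Matrix.head_fin_const, Matrix.empty_val',
        Matrix.cons_val_fin_one, smul_eq_mul, h1, h2, h3, h4, h5, Fin.mk_zero, Fin.mk_one] <;>
      · try simp only [mul_inv]
        field_simp
        try rw [div_eq_iff (by simp [hEne, hVne, hE2])]
        try ring
  have hTr : Matrix.trace (Ftilde12 a b * Ftilde12 a b)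
      = (1 / (2 * (E ^ 2 - 1))) ^ 2 * (2 * (E ^ 2)⁻¹ - 2) := by
    rw [hF]
    simp only [Matrix.trace_fin_two, Matrix.mul_apply, Fin.sum_univ_two, Matrix.smul_apply,
      Matrix.of_apply, Matrix.cons_val', Matrix.cons_val_zero, Matrix.cons_val_one,
      Matrix.head_cons, Matrix.head_fin_const, Matrix.empty_val', Matrix.cons_val_fin_one,
      smul_eq_mul]
    field_simp
    ring_nf
    rw [Complex.I_sq]
    ring_nf
  rw [neg_mul_neg, hTr]
  push_cast [hnre, hpre]
  field_simp
  ring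
end
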